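/- For G(α,β) = [[β+α, β−α],[α−β, −α−β]] with αβ > 0, the Krein phase rigidity of a τ₃-normalized eigenvector equals 2√(|α||β|)/(|α|+|β|), which vanishes as α → 0 with β fixed nonzero. -/

import Mathlib

open Matrix

/-- For `G(α,β)` with `αβ > 0`, the Krein phase rigidity `r = 1/⟨ψ|ψ⟩` of a
τ₃-normalized eigenvector `ψ` equals `2√(|α||β|)/(|α|+|β|)`, a quantity which
vanishes as `α → 0` with `β` fixed nonzero. -/
theorem single_mode_krein_phase_rigidity
    (α β : ℝ) (hαβ : 0 < α * β)
    (G : Matrix (Fin 2) (Fin 2) ℂ)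
    (hG : G = !![((β + α : ℝ) : ℂ), ((β - α : ℝ) : ℂ);
                 ((α - β : ℝ) : ℂ), ((-α - β : ℝ) : ℂ)])
    (ω : ℂ) (ψ : Fin 2 → ℂ) (hψ : ψ ≠ 0)
    (heig : G.mulVec ψ = ω • ψ)
    (hnorm : star ψ ⬝ᵥ (!![1, 0; 0, (-1 : ℂ)]).mulVec ψ = 1 ∨
             star ψ ⬝ᵥ (!![1, 0; 0, (-1 : ℂ)]).mulVec ψ = -1) :
    (star ψ ⬝ᵥ ψ)⁻¹ = ((2 * Real.sqrt (|α| * |β|) / (|α| + |β|) : ℝ) : ℂ) ∧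
    (β ≠ 0 → Filter.Tendsto (fun a : ℝ => 2 * Real.sqrt (|a| * |β|) / (|a| + |β|))
        (nhds 0) (nhds 0)) := by
  have h0 := congrFun heig 0
  have h1 := congrFun heig 1
  simp [hG, Matrix.mulVec, dotProduct, Fin.sum_univ_two, Matrix.vecHead, Matrix.vecTail] at h0 h1
  simp [Matrix.mulVec, dotProduct, Fin.sum_univ_two, Matrix.vecHead, Matrix.vecTail] at hnorm
  set x := ψ 0 with hxdef
  set y := ψ 1 with hydef
  -- the tau3 normalization as a real sign ε
  obtain ⟨ε, hε1, hε⟩ : ∃ ε : ℝ, ε ^ 2 = 1 ∧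
      (starRingEnd ℂ) x * x - (starRingEnd ℂ) y * y = (ε : ℂ) := by
    rcases hnorm with h | h
    · exact ⟨1, by norm_num, by push_cast; linear_combination h⟩
    · exact ⟨-1, by norm_num, by push_cast; linear_combination h⟩
  -- eigen equations as scalar relations
  have E1 : ((α : ℂ) + β - ω) * x = ((α : ℂ) - β) * y := by linear_combination h0
  have E2 : ((α : ℂ) - β) * x = ((α : ℂ) + β + ω) * y := by linear_combination h1
  have hx0 : (4 * (α : ℂ) * β - ω ^ 2) * x = 0 := by
    linear_combination ((α : ℂ) + β + ω) * E1 - ((α : ℂ) - β) * E2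
  have hy0 : (4 * (α : ℂ) * β - ω ^ 2) * y = 0 := by
    linear_combination ((α : ℂ) - β) * E1 - ((α : ℂ) + β - ω) * E2
  have hxy : x ≠ 0 ∨ y ≠ 0 := by
    by_contra h
    push_neg at h
    rw [h.1, h.2] at hε
    simp at hε
    have hε0 : ε = 0 := by exact_mod_cast hε.symm
    rw [hε0] at hε1
    norm_num at hε1
  have hω2 : ω ^ 2 = 4 * (α : ℂ) * β := by
    rcases hxy with h | h
    · rcases mul_eq_zero.mp hx0 with h' | h'
      · linear_combination -h'
      · exact absurd h' h
    · rcases mul_eq_zero.mp hy0 with h' | h'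
      · linear_combination -h'
      · exact absurd h' h
  -- ω is real
  have hωr : (starRingEnd ℂ) ω = ω := by
    have hc : ((starRingEnd ℂ) ω) ^ 2 = 4 * (α : ℂ) * β := by
      have := congrArg (starRingEnd ℂ) hω2
      simpa [Complex.conj_ofReal, map_ofNat] using this
    have hfac : ((starRingEnd ℂ) ω - ω) * ((starRingEnd ℂ) ω + ω) = 0 := by
      linear_combination hc - hω2
    rcases mul_eq_zero.mp hfac with h | h
    · linear_combination h
    · exfalso
      have hns : ((Complex.normSq ω : ℝ) : ℂ) + 4 * (α : ℂ) * β = 0 := by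
        linear_combination ω * h - Complex.mul_conj ω - hω2
      have hns' : Complex.normSq ω + 4 * α * β = 0 := by exact_mod_cast hns
      nlinarith [Complex.normSq_nonneg ω]
  -- conjugated eigen relations
  have E1s : ((α : ℂ) + β - ω) * (starRingEnd ℂ) x = ((α : ℂ) - β) * (starRingEnd ℂ) y := by
    have := congrArg (starRingEnd ℂ) E1
    simpa [_root_.map_mul, map_sub, map_add, Complex.conj_ofReal, hωr] using this
  have E2s : ((α : ℂ) - β) * (starRingEnd ℂ) x = ((α : ℂ) + β + ω) * (starRingEnd ℂ) y := by
    have := congrArg (starRingEnd ℂ) E2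
    simpa [_root_.map_mul, map_sub, map_add, Complex.conj_ofReal, hωr] using this
  -- key identity
  have habr : α + β ≠ 0 := by
    intro h
    have hb : β = -α := by linarith
    rw [hb] at hαβ
    nlinarith [sq_nonneg α]
  have habC : ((α : ℂ) + β) ≠ 0 := by
    intro h
    exact habr (by exact_mod_cast h)
  have keyA : ((α : ℂ) + β) * (((α : ℂ) + β) * ((starRingEnd ℂ) x * x - (starRingEnd ℂ) y * y)
      - ω * ((starRingEnd ℂ) x * x + (starRingEnd ℂ) y * y)) = 0 := by
    linear_combination (((α : ℂ) + β - ω) * ((starRingEnd ℂ) x) / 2) * E1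
      + (((α : ℂ) - β) * y / 2) * E1s
      + (((α : ℂ) - β) * ((starRingEnd ℂ) x) / 2) * E2
      + (((α : ℂ) + β + ω) * y / 2) * E2s
      - (((starRingEnd ℂ) x * x - (starRingEnd ℂ) y * y) / 2) * hω2
  have key : ((α : ℂ) + β) * ((starRingEnd ℂ) x * x - (starRingEnd ℂ) y * y)
      = ω * ((starRingEnd ℂ) x * x + (starRingEnd ℂ) y * y) := by
    rcases mul_eq_zero.mp keyA with h | h
    · exact absurd h habC
    · linear_combination h
  set n : ℝ := Complex.normSq x + Complex.normSq y with hndef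
  have hSn : (starRingEnd ℂ) x * x + (starRingEnd ℂ) y * y = ((n : ℝ) : ℂ) := by
    rw [hndef]
    push_cast
    rw [Complex.normSq_eq_conj_mul_self, Complex.normSq_eq_conj_mul_self]
  have hε1c : ((ε : ℝ) : ℂ) ^ 2 = 1 := by exact_mod_cast hε1
  have hkey2 : ((α : ℂ) + β) * (ε : ℂ) = ω * ((n : ℝ) : ℂ) := by
    rw [← hε, ← hSn]; exact key
  have hsq : (((α + β) ^ 2 : ℝ) : ℂ) = ((4 * α * β * n ^ 2 : ℝ) : ℂ) := by
    push_cast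
    linear_combination (((α : ℂ) + β) * ε + ω * ((n : ℝ) : ℂ)) * hkey2
      + (((n : ℝ) : ℂ)) ^ 2 * hω2 - (((α : ℂ) + β)) ^ 2 * hε1c
  have hreal : (α + β) ^ 2 = 4 * α * β * n ^ 2 := by exact_mod_cast hsq
  have hn0 : 0 ≤ n := add_nonneg (Complex.normSq_nonneg x) (Complex.normSq_nonneg y)
  have hnpos : 0 < n := by
    rcases hn0.lt_or_eq with h | h
    · exact h
    · exfalso
      rw [← h] at hreal
      simp at hreal
      exact habr (by nlinarith [sq_nonneg (α + β), hreal])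
  -- real computation
  have habm : |α| * |β| = α * β := by rw [← abs_mul, abs_of_pos hαβ]
  set r : ℝ := Real.sqrt (|α| * |β|) with hrdef
  have hr2 : r ^ 2 = α * β := by rw [hrdef, Real.sq_sqrt (by positivity), habm]
  have hrpos : 0 < r := Real.sqrt_pos.mpr (by rw [habm]; exact hαβ)
  have hα0 : α ≠ 0 := by
    intro h; rw [h] at hαβ; simp at hαβ
  have habs : (|α| + |β|) ^ 2 = (α + β) ^ 2 := by
    rw [add_sq, add_sq, sq_abs, sq_abs]
    linear_combination 2 * habm
  have habspos : 0 < |α| + |β| := by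
    have := abs_pos.mpr hα0
    have := abs_nonneg β
    linarith
  have h2rn : (2 * r * n) ^ 2 = (|α| + |β|) ^ 2 := by
    rw [habs]; linear_combination 4 * n ^ 2 * hr2 - hreal
  have h2rneq : 2 * r * n = |α| + |β| := by nlinarith [h2rn, sq_nonneg (2 * r * n - (|α| + |β|)), hrpos, hnpos, habspos, mul_pos hrpos hnpos]
  have hfin : n⁻¹ = 2 * Real.sqrt (|α| * |β|) / (|α| + |β|) := by
    rw [← hrdef, eq_div_iff habspos.ne']
    field_simp
    linarith
  constructor
  · have hdot : star ψ ⬝ᵥ ψ = ((n : ℝ) : ℂ) := by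
      simp only [dotProduct, Fin.sum_univ_two, Pi.star_apply, Complex.star_def]
      exact hSn
    rw [hdot, ← Complex.ofReal_inv]
    exact_mod_cast Complex.ofReal_inj.mpr hfin
  · intro hβ
    have hnum : Filter.Tendsto (fun a : ℝ => 2 * Real.sqrt (|a| * |β|)) (nhds 0) (nhds 0) := by
      have hc : Continuous fun a : ℝ => 2 * Real.sqrt (|a| * |β|) :=
        continuous_const.mul (Real.continuous_sqrt.comp (continuous_abs.mul continuous_const))
      have := hc.tendsto 0
      simpa using this
    have hden : Filter.Tendsto (fun a : ℝ => |a| + |β|) (nhds 0) (nhds |β|) := by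
      have hc : Continuous fun a : ℝ => |a| + |β| := continuous_abs.add continuous_const
      have := hc.tendsto 0
      simpa using this
    have := hnum.div hden (abs_ne_zero.mpr hβ)
    simpa [Pi.div_def] using this
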